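/- arXiv:1103.2167 — 6 statements merged into one kernel-verified Lean document; each statement's English description precedes it below -/
import Mathlib

section
/- Let R be a commutative ring, r ∈ R, and q a list over R of length m. Let 0 ≤ i ≤ m, c ∈ R, and let p = q.take i ++ [c] ++ q.drop i be the string obtained from q by inserting c at position i (so p has length m + 1). Then for every j with i + 1 ≤ j ≤ m + 1, the prefix p.take j of p satisfies H_r(p.take j) = H_r(p) − H_r(q.drop (j−1)) · r^{j}. -/
/-- The polynomial hash of a list `x = [x₀, …, x_{k-1}]` with seed `r`:
`H_r(x) = Σ_{i=0}^{k-1} x_i · r^(i+1)`. -/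
def polyHash {R : Type*} [CommRing R] (r : R) (x : List R) : R :=
  ∑ i : Fin x.length, x.get i * r ^ ((i : ℕ) + 1)

lemma polyHash_nil {R : Type*} [CommRing R] (r : R) : polyHash r [] = 0 := by
  simp [polyHash]

lemma polyHash_cons {R : Type*} [CommRing R] (r : R) (x : R) (xs : List R) :
    polyHash r (x :: xs) = x * r + r * polyHash r xs := by
  simp [polyHash, Fin.sum_univ_succ, Finset.mul_sum, pow_succ]
  exact Finset.sum_congr rfl fun _ _ => by ring

lemma polyHash_append {R : Type*} [CommRing R] (r : R) (a b : List R) :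
    polyHash r (a ++ b) = polyHash r a + polyHash r b * r ^ a.length := by
  induction a with
  | nil => simp [polyHash_nil]
  | cons x xs ih =>
      simp [polyHash_cons, ih, pow_succ]
      ring

/-- Hash of a prefix of the string `p` obtained from `q` by inserting `c` at position `i`,
for prefix lengths `j` with `i + 1 ≤ j ≤ m + 1`. -/
theorem polyHash_take_of_insertion {R : Type*} [CommRing R] (r : R) (q : List R) (m : ℕ)
    (hm : q.length = m) (i : ℕ) (hi : i ≤ m) (c : R)
    (p : List R) (hp : p = q.take i ++ [c] ++ q.drop i)
    (j : ℕ) (hij : i + 1 ≤ j) (hjm : j ≤ m + 1) :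
    polyHash r (p.take j) = polyHash r p - polyHash r (q.drop (j - 1)) * r ^ j := by
  have hplen : p.length = m + 1 := by
    subst hp
    simp
    omega
  have hdrop : p.drop j = q.drop (j - 1) := by
    subst hp
    rw [List.drop_append, List.drop_append]
    have h1 : (q.take i).length = i := by rw [List.length_take]; omega
    rw [h1]
    have : j - i ≥ 1 := by omega
    rw [List.drop_eq_nil_of_le (by omega : (q.take i).length ≤ j),
        List.drop_eq_nil_of_le (by simp; omega : ([c] : List R).length ≤ j - i)]
    simp [List.drop_drop]
    congr 1
    omega
  have htake : (p.take j).length = j := by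
    rw [List.length_take]
    omega
  have := polyHash_append r (p.take j) (p.drop j)
  rw [List.take_append_drop, htake, hdrop] at this
  rw [this]; ring
end

section
/- Let α be a linearly ordered type and let x, y, z, p be lists over α. If p is a prefix of x, p is a prefix of z, and x ≤ y ≤ z in the lexicographic order on lists, then p is a prefix of y. (Consequently, in a lexicographically sorted list of strings, the strings having a given prefix p form a contiguous range.) -/
theorem cons_le_cons_iff' {α : Type*} [LinearOrder α] {a b : α} {l l' : List α} :
    a :: l ≤ b :: l' ↔ a < b ∨ (a = b ∧ l ≤ l') := by
  rw [le_iff_lt_or_eq, le_iff_lt_or_eq]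
  show List.Lex (· < ·) _ _ ∨ _ ↔ _ ∨ _ ∧ (List.Lex (· < ·) _ _ ∨ _)
  constructor
  · rintro (h | h)
    · cases h with
      | cons h => exact Or.inr ⟨rfl, Or.inl h⟩
      | rel h => exact Or.inl h
    · injection h with h1 h2; exact Or.inr ⟨h1, Or.inr h2⟩
  · rintro (h | ⟨rfl, h | rfl⟩)
    · exact Or.inl (List.Lex.rel h)
    · exact Or.inl (List.Lex.cons h)
    · exact Or.inr rfl

/-- In the lexicographic order on lists, if `p` is a prefix of both `x` and `z` and
`x ≤ y ≤ z`, then `p` is a prefix of `y`. -/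
theorem isPrefix_of_le_of_le {α : Type*} [LinearOrder α] (x y z p : List α)
    (hx : p <+: x) (hz : p <+: z) (hxy : x ≤ y) (hyz : y ≤ z) : p <+: y := by
  induction p generalizing x y z with
  | nil => exact y.nil_prefix
  | cons a p ih =>
    obtain ⟨xs, rfl⟩ := hx
    obtain ⟨zs, rfl⟩ := hz
    match y with
    | [] => exact absurd hxy (not_le.2 (List.nil_lt_cons a _))
    | b :: ys =>
      simp only [List.cons_append] at hxy hyz
      rcases cons_le_cons_iff'.1 hxy with h1 | ⟨rfl, h1⟩
      · rcases cons_le_cons_iff'.1 hyz with h2 | ⟨rfl, h2⟩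
        · exact absurd (h1.trans h2) (lt_irrefl _)
        · exact absurd h1 (lt_irrefl _)
      · have h2 : ys ≤ p ++ zs := by
          rcases cons_le_cons_iff'.1 hyz with h2 | ⟨_, h2⟩
          · exact absurd h2 (lt_irrefl _)
          · exact h2
        obtain ⟨t, rfl⟩ := ih _ _ _ ⟨xs, rfl⟩ ⟨zs, rfl⟩ h1 h2
        exact ⟨t, rfl⟩
end

section
/- Let α be a linearly ordered type, p and s lists over α, b a natural number with |p| ≤ b, and # ∈ α an element such that # < a for every element a of p and every element a of s. Then s < p in the lexicographic order if and only if (s ++ replicate b #).take b < p in the lexicographic order. -/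
private lemma cons_lt_cons_iff' {α : Type*} [LinearOrder α] (x a : α) (l₁ l₂ : List α) :
    (x :: l₁ : List α) < (a :: l₂) ↔ x < a ∨ (x = a ∧ l₁ < l₂) := by
  constructor
  · intro h
    cases h with
    | cons h => exact Or.inr ⟨rfl, h⟩
    | rel h => exact Or.inl h
  · rintro (h | ⟨rfl, h⟩)
    · exact List.Lex.rel h
    · exact List.Lex.cons h

/-- If `|p| ≤ b` and `#` is smaller than every element of `p` and of `s`, then `s < p` in
lexicographic order iff the `b`-length prefix of `s` padded with `b` copies of `#` is
lexicographically smaller than `p`. -/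
theorem lt_iff_padded_take_lt {α : Type*} [LinearOrder α] (p s : List α) (b : ℕ)
    (hb : p.length ≤ b) (pad : α)
    (hp : ∀ a ∈ p, pad < a) (hs : ∀ a ∈ s, pad < a) :
    s < p ↔ (s ++ List.replicate b pad).take b < p := by
  induction p generalizing s b with
  | nil =>
    constructor <;> intro h <;> exact absurd h (List.not_lt_nil _)
  | cons a p ih =>
    obtain ⟨b, rfl⟩ : ∃ b', b = b' + 1 := ⟨b - 1, by simp at hb; omega⟩
    have hb' : p.length ≤ b := by simp at hb; omega
    cases s with
    | nil =>
      simp only [List.nil_append, List.take_replicate, List.replicate_succ]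
      rw [List.take_succ_cons]
      constructor
      · intro _
        exact List.Lex.rel (hp a (by simp))
      · intro _
        exact List.Lex.nil
    | cons x s =>
      have key : (x :: s ++ List.replicate (b+1) pad).take (b+1)
          = x :: (s ++ List.replicate b pad).take b := by
        simp only [List.cons_append, List.take_succ_cons, List.cons.injEq, true_and]
        rw [List.take_append, List.take_append,
          List.take_replicate, List.take_replicate]
        have h : (b - s.length) ⊓ (b + 1) = (b - s.length) ⊓ b := by omega
        rw [h]
      have ihs := ih s b hb' (fun y h => hp y (by simp [h])) (fun y h => hs y (by simp [h]))
      rw [key, cons_lt_cons_iff', cons_lt_cons_iff', ihs]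
end

section
/- Let F be a finite field and let x and y be two distinct lists over F, each of length at most L, all of whose elements are nonzero. Then the number of seeds r ∈ F for which H_r(x) = H_r(y) is at most L. -/
noncomputable def hashPoly {F : Type*} [Field F] (x : List F) : Polynomial F :=
  ∑ i : Fin x.length, Polynomial.C (x.get i) * Polynomial.X ^ ((i : ℕ) + 1)

lemma hashPoly_coeff {F : Type*} [Field F] (x : List F) (j : ℕ) :
    (hashPoly x).coeff (j + 1) = x.getD j 0 := by
  simp only [hashPoly, Polynomial.finset_sum_coeff, Polynomial.coeff_C_mul,
    Polynomial.coeff_X_pow]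
  by_cases h : j < x.length
  · rw [Finset.sum_eq_single (⟨j, h⟩ : Fin x.length)]
    · simp [List.getD_eq_getElem, h]
    · intro b _ hb
      have : (b : ℕ) + 1 ≠ j + 1 := by
        simp only [ne_eq, Nat.add_right_cancel_iff]
        intro hc; exact hb (Fin.ext hc)
      simp [this]
      exact fun hc => absurd hc (by omega)
    · simp
  · rw [List.getD_eq_default _ _ (le_of_not_gt h)]
    apply Finset.sum_eq_zero
    intro b _
    have : (b : ℕ) + 1 ≠ j + 1 := by
      simp only [ne_eq, Nat.add_right_cancel_iff]
      omega
    simp [this]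
    exact fun hc => absurd hc (by omega)

lemma hashPoly_eval {F : Type*} [Field F] (x : List F) (r : F) :
    (hashPoly x).eval r = polyHash r x := by
  simp [hashPoly, polyHash, Polynomial.eval_finset_sum]

lemma hashPoly_natDegree {F : Type*} [Field F] (x : List F) :
    (hashPoly x).natDegree ≤ x.length := by
  apply Polynomial.natDegree_sum_le_of_forall_le
  intro i _
  calc (Polynomial.C (x.get i) * Polynomial.X ^ ((i : ℕ) + 1)).natDegree
      ≤ (Polynomial.X ^ ((i : ℕ) + 1) : Polynomial F).natDegree :=
        Polynomial.natDegree_C_mul_le _ _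
    _ ≤ x.length := by rw [Polynomial.natDegree_X_pow]; exact i.2

/-- For two distinct lists of nonzero elements of a finite field, each of length at most `L`,
the number of seeds `r` for which their polynomial hashes collide is at most `L`. -/
theorem card_collision_seeds_le {F : Type*} [Field F] [Fintype F] [DecidableEq F]
    (L : ℕ) (x y : List F) (hxy : x ≠ y)
    (hx : x.length ≤ L) (hy : y.length ≤ L)
    (hx0 : ∀ a ∈ x, a ≠ 0) (hy0 : ∀ a ∈ y, a ≠ 0) :
    (Finset.univ.filter fun r : F => polyHash r x = polyHash r y).card ≤ L := by
  set p : Polynomial F := hashPoly x - hashPoly y with hp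
  have hcoeff : ∀ j : ℕ, p.coeff (j + 1) = x.getD j 0 - y.getD j 0 := by
    intro j; simp [hp, hashPoly_coeff]
  have hpne : p ≠ 0 := by
    intro h0
    have hall : ∀ j, x.getD j 0 = y.getD j 0 := by
      intro j
      have h := hcoeff j
      rw [h0, Polynomial.coeff_zero] at h
      exact sub_eq_zero.mp h.symm
    have hlen : x.length = y.length := by
      by_contra hne
      rcases Nat.lt_or_ge x.length y.length with h | h
      · have hj : y.length - 1 < y.length := by omega
        have h2 := hall (y.length - 1)
        rw [List.getD_eq_default _ _ (by omega), List.getD_eq_getElem _ _ hj] at h2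
        exact hy0 _ (List.getElem_mem hj) h2.symm
      · have h' : y.length < x.length := lt_of_le_of_ne h (Ne.symm hne)
        have hj : x.length - 1 < x.length := by omega
        have h2 := hall (x.length - 1)
        rw [List.getD_eq_getElem _ _ hj, List.getD_eq_default _ _ (by omega)] at h2
        exact hx0 _ (List.getElem_mem hj) h2
    apply hxy
    apply List.ext_getElem hlen
    intro i h1 h2
    have h3 := hall i
    rwa [List.getD_eq_getElem _ _ h1, List.getD_eq_getElem _ _ h2] at h3
  have hsub : (Finset.univ.filter fun r : F => polyHash r x = polyHash r y)
      ⊆ p.roots.toFinset := by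
    intro r hr
    rw [Finset.mem_filter] at hr
    rw [Multiset.mem_toFinset, Polynomial.mem_roots hpne]
    simp [Polynomial.IsRoot, hp, hashPoly_eval, hr.2]
  calc (Finset.univ.filter fun r : F => polyHash r x = polyHash r y).card
      ≤ p.roots.toFinset.card := Finset.card_le_card hsub
    _ ≤ Multiset.card p.roots := Multiset.toFinset_card_le _
    _ ≤ p.natDegree := p.card_roots'
    _ ≤ max (hashPoly x).natDegree (hashPoly y).natDegree := Polynomial.natDegree_sub_le _ _
    _ ≤ L := max_le (le_trans (hashPoly_natDegree x) hx) (le_trans (hashPoly_natDegree y) hy)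
end

section
/- Let F be a finite field and let S be a finite set of lists over F, each of length at most L, all of whose elements are nonzero. If L · (|S| choose 2) < |F|, then there exists a seed r ∈ F such that the map x ↦ H_r(x) is injective on S, i.e. all the hash values of the strings in S are pairwise distinct. -/
open Polynomial in
/-- If `L · (|S| choose 2) < |F|` then some seed `r` makes the polynomial hash injective on
the finite set `S` of lists of nonzero elements, each of length at most `L`. -/
theorem exists_injective_seed {F : Type*} [Field F] [Fintype F]
    (L : ℕ) (S : Finset (List F))
    (hlen : ∀ x ∈ S, x.length ≤ L) (h0 : ∀ x ∈ S, ∀ a ∈ x, a ≠ 0)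
    (hcard : L * (S.card.choose 2) < Fintype.card F) :
    ∃ r : F, Set.InjOn (fun x => polyHash r x) ↑S := by
  classical
  set P : List F → F[X] := fun x => ∑ i : Fin x.length, C (x.get i) * X ^ ((i : ℕ) + 1)
    with hP
  have heval : ∀ (r : F) (x : List F), polyHash r x = (P x).eval r := by
    intro r x
    simp [polyHash, hP, eval_finset_sum]
  have hcoeff : ∀ (x : List F) (j : ℕ), (P x).coeff (j + 1) = x.getD j 0 := by
    intro x j
    simp only [hP, finset_sum_coeff, coeff_C_mul, coeff_X_pow, Nat.add_left_inj]
    by_cases h : j < x.length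
    · rw [Finset.sum_eq_single (⟨j, h⟩ : Fin x.length)]
      · simp [List.getD, List.getElem?_eq_getElem h]
      · intro i _ hi
        have : j ≠ (i : ℕ) := by
          intro e; exact hi (Fin.ext e.symm)
        simp [this]
      · simp
    · rw [List.getD_eq_default _ _ (le_of_not_gt h)]
      apply Finset.sum_eq_zero
      intro i _
      have : j ≠ (i : ℕ) := by
        intro e; exact h (e ▸ i.isLt)
      simp [this]
  -- P is injective on lists with nonzero entries
  have hPinj : ∀ x ∈ S, ∀ y ∈ S, P x = P y → x = y := by
    intro x hx y hy hxy
    have hget : ∀ j, x.getD j 0 = y.getD j 0 := by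
      intro j; rw [← hcoeff, ← hcoeff, hxy]
    have hll : x.length = y.length := by
      by_contra hne
      rcases Nat.lt_or_ge x.length y.length with h | h
      · have h1 := hget x.length
        rw [List.getD_eq_default _ _ le_rfl, List.getD_eq_getElem _ _ h] at h1
        exact h0 y hy _ (List.getElem_mem h) h1.symm
      · have h' : y.length < x.length := lt_of_le_of_ne h (fun e => hne e.symm)
        have h1 := hget y.length
        rw [List.getD_eq_default _ _ le_rfl, List.getD_eq_getElem _ _ h'] at h1
        exact h0 x hx _ (List.getElem_mem h') h1
    apply List.ext_getElem hll
    intro i h1 h2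
    have := hget i
    rwa [List.getD_eq_getElem _ _ h1, List.getD_eq_getElem _ _ h2] at this
  have hdeg : ∀ x ∈ S, (P x).natDegree ≤ L := by
    intro x hx
    apply Polynomial.natDegree_sum_le_of_forall_le
    intro i _
    exact le_trans (natDegree_C_mul_X_pow_le _ _)
      (le_trans (Nat.succ_le_of_lt i.isLt) (hlen x hx))
  -- the bad set of seeds for an unordered pair
  let bad : Sym2 (List F) → Finset F := Sym2.lift ⟨fun x y => (P x - P y).roots.toFinset, by
    intro x y
    dsimp only
    rw [← roots_neg (P x - P y), neg_sub]⟩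
  have hbadcard : ∀ z ∈ S.offDiag.image (Function.uncurry Sym2.mk), (bad z).card ≤ L := by
    intro z hz
    obtain ⟨⟨x, y⟩, hxy, rfl⟩ := Finset.mem_image.mp hz
    rw [Finset.mem_offDiag] at hxy
    have : (bad (Function.uncurry Sym2.mk (x, y))) = (P x - P y).roots.toFinset := rfl
    rw [this]
    calc ((P x - P y).roots.toFinset).card ≤ Multiset.card (P x - P y).roots :=
          Multiset.toFinset_card_le _
      _ ≤ (P x - P y).natDegree := Polynomial.card_roots' _
      _ ≤ L := le_trans (Polynomial.natDegree_sub_le _ _)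
          (max_le (hdeg x hxy.1) (hdeg y hxy.2.1))
  set B : Finset F := (S.offDiag.image (Function.uncurry Sym2.mk)).biUnion bad with hB
  have hBcard : B.card < Fintype.card F := by
    calc B.card ≤ (S.offDiag.image (Function.uncurry Sym2.mk)).card * L :=
          Finset.card_biUnion_le_card_mul _ _ _ hbadcard
      _ = L * S.card.choose 2 := by rw [Sym2.card_image_offDiag, mul_comm]
      _ < Fintype.card F := hcard
  have hex : ∃ r : F, r ∉ B := by
    by_contra hc
    push_neg at hc
    have : (Finset.univ : Finset F) ⊆ B := fun r _ => hc r
    have := Finset.card_le_card this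
    simp only [Finset.card_univ] at this
    omega
  obtain ⟨r, hr⟩ := hex
  refine ⟨r, ?_⟩
  intro x hx y hy heq
  simp only [Finset.mem_coe] at hx hy
  by_contra hne
  have hmem : s(x, y) ∈ S.offDiag.image (Function.uncurry Sym2.mk) :=
    Finset.mem_image.mpr ⟨(x, y), Finset.mem_offDiag.mpr ⟨hx, hy, hne⟩, rfl⟩
  have hPne : P x - P y ≠ 0 := by
    intro h
    exact hne (hPinj x hx y hy (sub_eq_zero.mp h))
  have hroot : r ∈ (P x - P y).roots.toFinset := by
    rw [Multiset.mem_toFinset, Polynomial.mem_roots hPne]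
    simp only [Polynomial.IsRoot, Polynomial.eval_sub]
    simp only [heval] at heq
    rw [heq, sub_self]
  exact hr (Finset.mem_biUnion.mpr ⟨s(x, y), hmem, hroot⟩)
end

section
/- Let α be a type with decidable equality and let q and p be lists over α, with m = |q|. The Levenshtein edit distance between q and p (with unit costs for insertion, deletion, and substitution) is at most 1 if and only if p = q, or p = q.eraseIdx i for some i < m, or p = q.set i c for some i < m and c ∈ α, or p = q.insertIdx i c for some i ≤ m and c ∈ α. -/
namespace Levenshtein

structure Cost (α β δ : Type*) where
  delete : α → δ
  insert : β → δ
  substitute : α → β → δ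

def defaultCost {α : Type*} [DecidableEq α] : Cost α α ℕ where
  delete _ := 1
  insert _ := 1
  substitute a b := if a = b then 0 else 1

def impl {α β δ : Type*} [AddZeroClass δ] [Min δ]
    (C : Cost α β δ)
    (xs : List α) (y : β) (d : {r : List δ // 0 < r.length}) : {r : List δ // 0 < r.length} :=
  let ⟨ds, w⟩ := d
  xs.zip (ds.zip ds.tail) |>.foldr
    (init := ⟨[ds.getLast (List.ne_nil_of_length_pos w) + C.insert y], by simp⟩)
    (fun ⟨x, d₀, d₁⟩ ⟨r, w⟩ =>
      ⟨min (C.delete x + r[0]'w) (min (C.insert y + d₀) (C.substitute x y + d₁)) :: r, by simp⟩)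

end Levenshtein

open Levenshtein

def suffixLevenshtein {α β δ : Type*} [AddZeroClass δ] [Min δ] (C : Cost α β δ)
    (xs : List α) (ys : List β) : {r : List δ // 0 < r.length} :=
  ys.foldr
    (impl C xs)
    (xs.foldr (init := ⟨[0], by simp⟩) (fun a ⟨r, w⟩ => ⟨(C.delete a + r[0]'w) :: r, by simp⟩))

def levenshtein {α β δ : Type*} [AddZeroClass δ] [Min δ] (C : Cost α β δ)
    (xs : List α) (ys : List β) : δ :=
  let ⟨r, w⟩ := suffixLevenshtein C xs ys
  r[0]'w


namespace Levenshtein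

@[simp] theorem defaultCost_delete {α : Type*} [DecidableEq α] (a : α) :
    (defaultCost : Cost α α ℕ).delete a = 1 := rfl

@[simp] theorem defaultCost_insert {α : Type*} [DecidableEq α] (a : α) :
    (defaultCost : Cost α α ℕ).insert a = 1 := rfl

@[simp] theorem defaultCost_substitute {α : Type*} [DecidableEq α] (a b : α) :
    (defaultCost : Cost α α ℕ).substitute a b = if a = b then 0 else 1 := rfl

end Levenshtein

section LevAux
variable {α β δ : Type*} [AddZeroClass δ] [Min δ] (C : Cost α β δ)

theorem impl_cons' {x : α} {xs : List α} {y : β} {d : δ} {ds : List δ} {w}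
    (w' : 0 < List.length ds) :
    impl C (x :: xs) y ⟨d :: ds, w⟩ =
      let ⟨r, w⟩ := impl C xs y ⟨ds, w'⟩
      ⟨min (C.delete x + r[0]) (min (C.insert y + d) (C.substitute x y + ds[0])) :: r, by simp⟩ :=
  match ds, w' with | _ :: _, _ => rfl

theorem impl_cons_fst_zero' {x : α} {xs : List α} {y : β} {d : δ} {ds : List δ} {w} (h)
    (w' : 0 < List.length ds) :
    (impl C (x :: xs) y ⟨d :: ds, w⟩).1[0]'h =
      let ⟨r, w⟩ := impl C xs y ⟨ds, w'⟩
      min (C.delete x + r[0]) (min (C.insert y + d) (C.substitute x y + ds[0])) :=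
  match ds, w' with | _ :: _, _ => rfl

theorem impl_length' {xs : List α} {y : β} (d : {r : List δ // 0 < r.length})
    (w : d.1.length = xs.length + 1) :
    (impl C xs y d).1.length = xs.length + 1 := by
  induction xs generalizing d with
  | nil => rfl
  | cons x xs ih =>
    match d, w with
    | ⟨d₁ :: d₂ :: ds, _⟩, w =>
      rw [impl_cons' C (by simp)]
      simp only [List.length_cons]
      congr 1
      exact ih ⟨d₂ :: ds, (by simp)⟩ (by simpa using w)

theorem suffixLevenshtein_length' (xs : List α) (ys : List β) :
    (suffixLevenshtein C xs ys).1.length = xs.length + 1 := by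
  induction ys with
  | nil =>
    dsimp [suffixLevenshtein]
    induction xs with
    | nil => rfl
    | cons _ xs ih => simp_all
  | cons y ys ih =>
    show (impl C xs y (suffixLevenshtein C xs ys)).1.length = _
    rw [impl_length']
    exact ih

theorem suffixLevenshtein_cons₂' (xs : List α) (y ys) :
    suffixLevenshtein C xs (y :: ys) = (impl C xs) y (suffixLevenshtein C xs ys) :=
  rfl

theorem suffixLevenshtein_cons₁_aux' {α} {x y : { l : List α // 0 < l.length }}
    (w₀ : x.1[0]'x.2 = y.1[0]'y.2) (w : x.1.tail = y.1.tail) : x = y := by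
  match x, y with
  | ⟨hx :: tx, _⟩, ⟨hy :: ty, _⟩ => simp_all

theorem suffixLevenshtein_cons₁' (x : α) (xs ys) :
    suffixLevenshtein C (x :: xs) ys =
      ⟨levenshtein C (x :: xs) ys :: (suffixLevenshtein C xs ys).1, by simp⟩ := by
  induction ys with
  | nil => rfl
  | cons y ys ih =>
    apply suffixLevenshtein_cons₁_aux'
    · rfl
    · rw [suffixLevenshtein_cons₂' C (x :: xs), ih, impl_cons']
      · rfl
      · simp [suffixLevenshtein_length']

@[simp] theorem levenshtein_nil_nil : levenshtein C [] [] = 0 := rfl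

theorem levenshtein_nil_cons' (y) (ys) :
    levenshtein C [] (y :: ys) = levenshtein C [] ys + C.insert y := by
  have hl := suffixLevenshtein_length' C ([] : List α) ys
  show (impl C [] y (suffixLevenshtein C [] ys)).1[0]'(by simp [impl]) = _
  rcases h : suffixLevenshtein C [] ys with ⟨r, w⟩
  rw [h] at hl
  simp only [List.length_nil, zero_add] at hl
  match r, hl with
  | [a], _ =>
    have : levenshtein C [] ys = a := by
      unfold levenshtein; rw [h]; rfl
    rw [this]
    rfl

theorem levenshtein_cons_nil (x : α) (xs : List α) :
    levenshtein C (x :: xs) [] = C.delete x + levenshtein C xs [] :=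
  rfl

theorem levenshtein_cons_cons (x : α) (xs : List α) (y : β) (ys : List β) :
    levenshtein C (x :: xs) (y :: ys) =
      min (C.delete x + levenshtein C xs (y :: ys))
        (min (C.insert y + levenshtein C (x :: xs) ys)
          (C.substitute x y + levenshtein C xs ys)) := by
  show (impl C (x :: xs) y (suffixLevenshtein C (x :: xs) ys)).1[0]'(by
    rw [impl_length' C _ (suffixLevenshtein_length' C _ _)]; simp) = _
  simp only [suffixLevenshtein_cons₁']
  rw [impl_cons_fst_zero' C _ (by simp [suffixLevenshtein_length'])]
  rfl

theorem levenshtein_nil_cons {α β δ : Type*} [AddCommMonoid δ] [Min δ] (C : Cost α β δ)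
    (y) (ys) : levenshtein C [] (y :: ys) = C.insert y + levenshtein C [] ys := by
  rw [levenshtein_nil_cons', add_comm]

end LevAux

private def OneEdit {α : Type*} (q p : List α) : Prop :=
  p = q ∨ (∃ i < q.length, p = q.eraseIdx i) ∨ (∃ i < q.length, ∃ c : α, p = q.set i c) ∨
    (∃ i ≤ q.length, ∃ c : α, p = q.insertIdx i c)

private lemma lev_nil_left {α : Type*} [DecidableEq α] (ys : List α) :
    levenshtein Levenshtein.defaultCost [] ys = ys.length := by
  induction ys with
  | nil => simp
  | cons y ys ih => simp [levenshtein_nil_cons, ih]; omega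

private lemma lev_nil_right {α : Type*} [DecidableEq α] (xs : List α) :
    levenshtein Levenshtein.defaultCost xs [] = xs.length := by
  induction xs with
  | nil => simp
  | cons x xs ih => simp [levenshtein_cons_nil, ih]; omega

private lemma lev_eq_zero_iff {α : Type*} [DecidableEq α] :
    ∀ (xs ys : List α), levenshtein Levenshtein.defaultCost xs ys = 0 ↔ xs = ys
  | [], ys => by simp [lev_nil_left, eq_comm]
  | x :: xs, [] => by simp [lev_nil_right]
  | x :: xs, y :: ys => by
    rw [levenshtein_cons_cons]
    simp only [defaultCost_delete, defaultCost_insert, defaultCost_substitute,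
      Nat.min_eq_zero_iff, Nat.add_eq_zero, one_ne_zero, false_and, false_or,
      List.cons.injEq]
    rcases eq_or_ne x y with h | h <;> simp [h, lev_eq_zero_iff xs ys]

private lemma oneEdit_cons_cons_same {α : Type*} (x : α) (xs ys : List α) :
    OneEdit (x :: xs) (x :: ys) ↔ OneEdit xs ys := by
  constructor
  · rintro (h | ⟨i, hi, h⟩ | ⟨i, hi, c, h⟩ | ⟨i, hi, c, h⟩)
    · exact Or.inl (by simpa using h)
    · match i with
      | 0 =>
        simp only [List.eraseIdx_cons_zero] at h
        refine Or.inr (Or.inl ⟨0, ?_, ?_⟩) <;> simp [← h]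
      | j + 1 =>
        simp only [List.eraseIdx_cons_succ, List.cons.injEq, true_and] at h
        exact Or.inr (Or.inl ⟨j, by simpa using hi, h⟩)
    · match i with
      | 0 =>
        simp only [List.set_cons_zero, List.cons.injEq] at h
        exact Or.inl h.2
      | j + 1 =>
        simp only [List.set_cons_succ, List.cons.injEq, true_and] at h
        exact Or.inr (Or.inr (Or.inl ⟨j, by simpa using hi, c, h⟩))
    · match i with
      | 0 =>
        simp only [List.insertIdx_zero, List.cons.injEq] at h
        refine Or.inr (Or.inr (Or.inr ⟨0, by simp, x, ?_⟩))
        simp [h.2, ← h.1]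
      | j + 1 =>
        rw [List.insertIdx_succ_cons] at h
        simp only [List.cons.injEq, true_and] at h
        exact Or.inr (Or.inr (Or.inr ⟨j, by simpa using hi, c, h⟩))
  · rintro (h | ⟨i, hi, h⟩ | ⟨i, hi, c, h⟩ | ⟨i, hi, c, h⟩)
    · exact Or.inl (by simp [h])
    · exact Or.inr (Or.inl ⟨i + 1, by simpa using hi, by simp [h]⟩)
    · exact Or.inr (Or.inr (Or.inl ⟨i + 1, by simpa using hi, c, by simp [h]⟩))
    · exact Or.inr (Or.inr (Or.inr ⟨i + 1, by simpa using hi, c,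
        by simp [h, List.insertIdx_succ_cons]⟩))

private lemma key {α : Type*} [DecidableEq α] :
    ∀ (q p : List α), levenshtein Levenshtein.defaultCost q p ≤ 1 ↔ OneEdit q p
  | [], p => by
    rw [lev_nil_left]
    constructor
    · intro h
      match p, h with
      | [], _ => exact Or.inl rfl
      | [c], _ => exact Or.inr (Or.inr (Or.inr ⟨0, le_refl _, c, rfl⟩))
    · rintro (h | ⟨i, hi, h⟩ | ⟨i, hi, c, h⟩ | ⟨i, hi, c, h⟩)
      · simp [h]
      · simp at hi
      · simp at hi
      · have h0 : i = 0 := by simpa using hi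
        subst h0
        simp [h]
  | x :: xs, [] => by
    rw [lev_nil_right]
    constructor
    · intro h
      have hxs : xs = [] := by simpa using h
      subst hxs
      exact Or.inr (Or.inl ⟨0, by simp, rfl⟩)
    · rintro (h | ⟨i, hi, h⟩ | ⟨i, hi, c, h⟩ | ⟨i, hi, c, h⟩)
      · simp at h
      · match i with
        | 0 =>
          simp only [List.eraseIdx_cons_zero] at h
          simp [← h]
        | j + 1 => simp at h
      · have := congrArg List.length h
        simp at this
      · have := congrArg List.length h
        rw [List.length_insertIdx_of_le_length hi] at this
        simp at this
  | x :: xs, y :: ys => by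
    rw [levenshtein_cons_cons]
    simp only [defaultCost_delete, defaultCost_insert, defaultCost_substitute]
    have hmin : ∀ a b c : ℕ, min a (min b c) ≤ 1 ↔ a ≤ 1 ∨ b ≤ 1 ∨ c ≤ 1 := by
      intro a b c; omega
    rw [hmin]
    have h1 : (1 + levenshtein Levenshtein.defaultCost xs (y :: ys) ≤ 1) ↔ xs = y :: ys := by
      rw [show (1 + levenshtein Levenshtein.defaultCost xs (y :: ys) ≤ 1) ↔
        levenshtein Levenshtein.defaultCost xs (y :: ys) = 0 by omega, lev_eq_zero_iff]
    have h2 : (1 + levenshtein Levenshtein.defaultCost (x :: xs) ys ≤ 1) ↔ x :: xs = ys := by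
      rw [show (1 + levenshtein Levenshtein.defaultCost (x :: xs) ys ≤ 1) ↔
        levenshtein Levenshtein.defaultCost (x :: xs) ys = 0 by omega, lev_eq_zero_iff]
    rw [h1, h2]
    rcases eq_or_ne x y with rfl | hxy
    · rw [if_pos rfl, Nat.zero_add]
      rw [key xs ys, oneEdit_cons_cons_same]
      constructor
      · rintro (h | h | h)
        · -- xs = x :: ys, so ys = xs.eraseIdx 0
          subst h
          exact Or.inr (Or.inl ⟨0, by simp, rfl⟩)
        · -- ys = x :: xs
          exact Or.inr (Or.inr (Or.inr ⟨0, by simp, x, by simp [h.symm]⟩))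
        · exact h
      · exact fun h => Or.inr (Or.inr h)
    · rw [if_neg hxy]
      rw [show (1 + levenshtein Levenshtein.defaultCost xs ys ≤ 1) ↔
        levenshtein Levenshtein.defaultCost xs ys = 0 by omega, lev_eq_zero_iff]
      constructor
      · rintro (h | h | h)
        · exact Or.inr (Or.inl ⟨0, by simp, by simp [h]⟩)
        · exact Or.inr (Or.inr (Or.inr ⟨0, by simp, y, by simp [← h]⟩))
        · exact Or.inr (Or.inr (Or.inl ⟨0, by simp, y, by simp [h]⟩))
      · rintro (h | ⟨i, hi, h⟩ | ⟨i, hi, c, h⟩ | ⟨i, hi, c, h⟩)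
        · simp only [List.cons.injEq] at h
          exact absurd h.1.symm hxy
        · match i with
          | 0 => exact Or.inl (by simpa using h.symm)
          | j + 1 =>
            simp only [List.eraseIdx_cons_succ, List.cons.injEq] at h
            exact absurd h.1.symm hxy
        · match i with
          | 0 =>
            simp only [List.set_cons_zero, List.cons.injEq] at h
            exact Or.inr (Or.inr h.2.symm)
          | j + 1 =>
            simp only [List.set_cons_succ, List.cons.injEq] at h
            exact absurd h.1.symm hxy
        · match i with
          | 0 =>
            simp only [List.insertIdx_zero, List.cons.injEq] at h
            exact Or.inr (Or.inl h.2.symm)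
          | j + 1 =>
            rw [List.insertIdx_succ_cons] at h
            simp only [List.cons.injEq] at h
            exact absurd h.1.symm hxy

/-- The Levenshtein edit distance (unit costs) between `q` and `p` is at most `1` iff
`p` equals `q`, or `p` is obtained from `q` by one deletion, one substitution, or one
insertion. -/
theorem levenshtein_le_one_iff {α : Type*} [DecidableEq α] (q p : List α) (m : ℕ)
    (hm : q.length = m) :
    levenshtein Levenshtein.defaultCost q p ≤ 1 ↔
      p = q ∨ (∃ i < m, p = q.eraseIdx i) ∨ (∃ i < m, ∃ c : α, p = q.set i c) ∨
        (∃ i ≤ m, ∃ c : α, p = q.insertIdx i c) := by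
  subst hm
  exact key q p
end
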